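/- Let n ≥ 1, let V = {x ∈ ℝ^{n+1} : x₁ + ⋯ + x_{n+1} = 0} with the standard inner product, on which the symmetric group S_{n+1} acts by permuting coordinates (the Weyl group of the root system A_n). Fix 1 ≤ r ≤ n, set s = n + 1 − r, and let a_r = (1/(n+1))(s, …, s, −r, …, −r) ∈ V (r coordinates equal to s/(n+1), followed by s coordinates equal to −r/(n+1)). The stabilizer of a_r in S_{n+1} is the subgroup S_r × S_s permuting the first r and the last s coordinates separately. Then every S_r × S_s-invariant polynomial function on V lies in the ℝ-subalgebra generated by the S_{n+1}-invariant polynomial functions f on V together with their translates v ↦ f(v + a_r). -/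

import Mathlib

open scoped RealInnerProductSpace

/-- The linear functional `x ↦ ∑ i, x i` on `ℝ^m`. -/
noncomputable def coordSum (m : ℕ) : EuclideanSpace ℝ (Fin m) →ₗ[ℝ] ℝ where
  toFun x := ∑ i, x i
  map_add' x y := by simp [Finset.sum_add_distrib]
  map_smul' c x := by simp [Finset.mul_sum]

/-- The hyperplane `V = {x ∈ ℝ^{n+1} : x₁ + ⋯ + x_{n+1} = 0}`. -/
noncomputable def zeroSum (n : ℕ) : Submodule ℝ (EuclideanSpace ℝ (Fin (n + 1))) :=
  LinearMap.ker (coordSum (n + 1))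

/-- The action of a permutation `σ ∈ S_{n+1}` on the zero-sum hyperplane, by permutation
of the coordinates. -/
noncomputable def permAct {n : ℕ} (σ : Equiv.Perm (Fin (n + 1))) (x : zeroSum n) : zeroSum n :=
  ⟨(WithLp.toLp 2 (fun i => (x : EuclideanSpace ℝ (Fin (n + 1))) (σ i)) : EuclideanSpace ℝ (Fin (n + 1))), by
    have hx : ∑ i, (x : EuclideanSpace ℝ (Fin (n + 1))) i = 0 := x.2
    have : ∑ i, (x : EuclideanSpace ℝ (Fin (n + 1))) (σ i)
        = ∑ i, (x : EuclideanSpace ℝ (Fin (n + 1))) i :=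
      Equiv.sum_comp σ _
    show ∑ i, (x : EuclideanSpace ℝ (Fin (n + 1))) (σ i) = 0
    rw [this, hx]⟩

/-- A polynomial function on a real vector space `M`: an element of the `ℝ`-subalgebra of
`M → ℝ` generated by the linear functionals. -/
def IsPolyFun {M : Type*} [AddCommGroup M] [Module ℝ M] (f : M → ℝ) : Prop :=
  f ∈ Algebra.adjoin ℝ {g : M → ℝ | ∃ l : M →ₗ[ℝ] ℝ, g = ⇑l}

/-! ### Auxiliary material for the proof -/

set_option linter.unusedSectionVars false

open MvPolynomial

namespace AnAux

/-! #### Newton: elementary symmetric polynomials lie in the algebra generated by power sums -/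

lemma esymm_mem_adjoin_psum (m : ℕ) (k : ℕ) :
    esymm (Fin m) ℝ k ∈ Algebra.adjoin ℝ (Set.range (psum (Fin m) ℝ)) := by
  induction k using Nat.strong_induction_on with
  | _ k ih =>
    match k with
    | 0 => simpa [esymm_zero] using one_mem _
    | (k+1) =>
      have h := mul_esymm_eq_sum (Fin m) ℝ (k+1)
      have hk0 : ((k:ℝ)+1) ≠ 0 := by positivity
      have h2 : esymm (Fin m) ℝ (k+1)
          = C (((k:ℝ)+1))⁻¹ * (((k+1 : ℕ) : MvPolynomial (Fin m) ℝ) * esymm (Fin m) ℝ (k+1)) := by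
        rw [← mul_assoc]
        have : ((k+1 : ℕ) : MvPolynomial (Fin m) ℝ) = C ((k:ℝ)+1) := by
          push_cast
          simp [map_add, map_one]
        rw [this, ← map_mul, inv_mul_cancel₀ hk0, map_one, one_mul]
      rw [h2, h]
      refine mul_mem ?_ (mul_mem ?_ ?_)
      · rw [show (C (((k:ℝ)+1))⁻¹ : MvPolynomial (Fin m) ℝ) = algebraMap ℝ _ (((k:ℝ)+1))⁻¹ from rfl]
        exact Subalgebra.algebraMap_mem _ _
      · exact pow_mem (neg_mem (one_mem _)) _
      · refine Subalgebra.sum_mem _ fun p hp => ?_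
        rw [Finset.mem_filter, Finset.HasAntidiagonal.mem_antidiagonal] at hp
        exact mul_mem (mul_mem (pow_mem (neg_mem (one_mem _)) _) (ih p.1 (by omega)))
          (Algebra.subset_adjoin ⟨p.2, rfl⟩)

/-! #### The fundamental theorem for a product of two symmetric groups -/

section BiSym

variable {A B : Type*} [Fintype A] [DecidableEq A] [Fintype B] [DecidableEq B]

lemma sumAlg_rename_left (e : Equiv.Perm A) (Q : MvPolynomial (A ⊕ B) ℝ) :
    sumAlgEquiv ℝ A B (rename (Equiv.sumCongr e (Equiv.refl B)) Q)
      = rename e (sumAlgEquiv ℝ A B Q) := by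
  induction Q using MvPolynomial.induction_on with
  | C c => simp [rename_C]
  | add p q hp hq => simp only [map_add, hp, hq]
  | mul_X p i hp =>
    cases i with
    | inl a => simp only [map_mul, hp, rename_X, Equiv.sumCongr_apply, Sum.map_inl,
        sumAlgEquiv_X_inl]
    | inr b => simp only [map_mul, hp, rename_X, Equiv.sumCongr_apply, Sum.map_inr,
        Equiv.refl_apply, sumAlgEquiv_X_inr, rename_C]

lemma sumAlg_rename_right (e : Equiv.Perm B) (Q : MvPolynomial (A ⊕ B) ℝ) :
    sumAlgEquiv ℝ A B (rename (Equiv.sumCongr (Equiv.refl A) e) Q)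
      = map (rename e : MvPolynomial B ℝ →ₐ[ℝ] MvPolynomial B ℝ).toRingHom
          (sumAlgEquiv ℝ A B Q) := by
  induction Q using MvPolynomial.induction_on with
  | C c => simp [rename_C, map_C]
  | add p q hp hq => simp only [map_add, hp, hq]
  | mul_X p i hp =>
    cases i with
    | inl a => simp only [map_mul, hp, rename_X, Equiv.sumCongr_apply, Sum.map_inl,
        Equiv.refl_apply, sumAlgEquiv_X_inl, map_X]
    | inr b => simp only [map_mul, hp, rename_X, Equiv.sumCongr_apply, Sum.map_inr,
        sumAlgEquiv_X_inr, map_C, AlgHom.toRingHom_eq_coe, RingHom.coe_coe, rename_X]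

lemma sumAlg_symm_C (c : MvPolynomial B ℝ) :
    (sumAlgEquiv ℝ A B).symm (C c) = rename Sum.inr c := by
  apply (sumAlgEquiv ℝ A B).injective
  rw [AlgEquiv.apply_symm_apply]
  have := AlgHom.congr_fun (sumAlgEquiv_comp_rename_inr ℝ A B) c
  simpa using this.symm

lemma sumAlg_symm_esymm (k : ℕ) :
    (sumAlgEquiv ℝ A B).symm (esymm A (MvPolynomial B ℝ) k) = rename Sum.inl (esymm A ℝ k) := by
  apply (sumAlgEquiv ℝ A B).injective
  rw [AlgEquiv.apply_symm_apply]
  have := AlgHom.congr_fun (sumAlgEquiv_comp_rename_inl ℝ A B) (esymm A ℝ k)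
  simp only [AlgHom.comp_apply, AlgEquiv.toAlgHom_eq_coe, AlgHom.coe_coe, AlgEquiv.coe_toAlgHom] at this
  rw [this, show (mapAlgHom (Algebra.ofId ℝ (MvPolynomial B ℝ)) :
      MvPolynomial A ℝ →ₐ[ℝ] MvPolynomial A (MvPolynomial B ℝ)) (esymm A ℝ k)
      = map (Algebra.ofId ℝ (MvPolynomial B ℝ)).toRingHom (esymm A ℝ k) from rfl, map_esymm]

theorem bisym_mem (P : MvPolynomial (A ⊕ B) ℝ)
    (hA : ∀ e : Equiv.Perm A, rename (Equiv.sumCongr e (Equiv.refl B)) P = P)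
    (hB : ∀ e : Equiv.Perm B, rename (Equiv.sumCongr (Equiv.refl A) e) P = P) :
    P ∈ Algebra.adjoin ℝ
      ((Set.range fun k : ℕ => rename (Sum.inl : A → A ⊕ B) (esymm A ℝ k)) ∪
       (Set.range fun k : ℕ => rename (Sum.inr : B → A ⊕ B) (esymm B ℝ k))) := by
  classical
  set R' := MvPolynomial B ℝ
  set Φ := sumAlgEquiv ℝ A B with hΦ
  set P1 := Φ P with hP1
  have hsym1 : P1.IsSymmetric := by
    intro e
    rw [hP1, ← sumAlg_rename_left e P, hA e]
  obtain ⟨q, hq⟩ : ∃ q : MvPolynomial (Fin (Fintype.card A)) R',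
      aeval (fun i : Fin (Fintype.card A) => esymm A R' (i + 1)) q = P1 := by
    obtain ⟨q, hq⟩ := esymmAlgHom_surjective (σ := A) R' le_rfl
      (⟨P1, hsym1⟩ : symmetricSubalgebra A R')
    exact ⟨q, by rw [← esymmAlgHom_apply, hq]⟩
  have hcoeff : ∀ d, (coeff d q).IsSymmetric := by
    intro d e
    set fR : R' →+* R' := (rename e : MvPolynomial B ℝ →ₐ[ℝ] MvPolynomial B ℝ).toRingHom with hfR
    have h1 : map fR P1 = P1 := by
      rw [hP1, ← sumAlg_rename_right e P, hB e]
    have e1 : aeval (fun i : Fin (Fintype.card A) => esymm A R' (i + 1)) (map fR q)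
        = eval₂ ((algebraMap R' (MvPolynomial A R')).comp fR)
            (fun i : Fin (Fintype.card A) => esymm A R' (i + 1)) q := by
      rw [aeval_def, eval₂_map]
    have e2 : map fR (aeval (fun i : Fin (Fintype.card A) => esymm A R' (i + 1)) q)
        = eval₂ ((algebraMap R' (MvPolynomial A R')).comp fR)
            (fun i : Fin (Fintype.card A) => esymm A R' (i + 1)) q := by
      rw [map_aeval]
      have hg : (fun i : Fin (Fintype.card A) => map fR (esymm A R' (i + 1)))
          = fun i : Fin (Fintype.card A) => esymm A R' (i + 1) := by
        funext i; exact map_esymm A R' _ fR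
      have hring : (map fR).comp (algebraMap R' (MvPolynomial A R'))
          = (algebraMap R' (MvPolynomial A R')).comp fR := by
        refine RingHom.ext fun x => ?_
        simp [algebraMap_eq, map_C]
      rw [hg, hring]
      rfl
    have h3 : map fR q = q := by
      have hinj : Function.Injective (esymmAlgHom A R' (Fintype.card A)) :=
        esymmAlgHom_injective (σ := A) R' le_rfl
      apply hinj
      apply Subtype.ext
      rw [esymmAlgHom_apply, esymmAlgHom_apply, e1, ← e2, hq, h1]
    calc rename e (coeff d q) = coeff d (map fR q) := (coeff_map _ _ _).symm
    _ = coeff d q := by rw [h3]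
  have hP : P = Φ.symm (aeval (fun i : Fin (Fintype.card A) => esymm A R' (i + 1)) q) := by
    rw [hq, hP1, AlgEquiv.symm_apply_apply]
  rw [as_sum q] at hP
  rw [hP, map_sum, map_sum]
  refine Subalgebra.sum_mem _ fun d hd => ?_
  rw [aeval_monomial, map_mul]
  refine mul_mem ?_ ?_
  · have hsc : (Φ.symm (algebraMap R' (MvPolynomial A R') (coeff d q)))
        = rename Sum.inr (coeff d q) := by
      rw [algebraMap_eq]; exact sumAlg_symm_C _
    rw [hsc]
    have hc : coeff d q ∈ Algebra.adjoin ℝ (Set.range fun k : ℕ => esymm B ℝ k) := by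
      obtain ⟨q', hq'⟩ := esymmAlgHom_surjective (σ := B) ℝ le_rfl
        (⟨coeff d q, hcoeff d⟩ : symmetricSubalgebra B ℝ)
      have hval : coeff d q = aeval (fun i : Fin (Fintype.card B) => esymm B ℝ (i + 1)) q' := by
        rw [← esymmAlgHom_apply, hq']
      have hc1 : coeff d q ∈ Algebra.adjoin ℝ
          (Set.range fun i : Fin (Fintype.card B) => esymm B ℝ (i + 1)) := by
        rw [Algebra.adjoin_range_eq_range_aeval]
        exact ⟨q', hval.symm⟩
      exact Algebra.adjoin_mono (by rintro _ ⟨i, rfl⟩; exact ⟨(i : ℕ) + 1, rfl⟩) hc1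
    have h5 : rename (Sum.inr : B → A ⊕ B) (coeff d q)
        ∈ (Algebra.adjoin ℝ (Set.range fun k : ℕ => esymm B ℝ k)).map
            (rename (Sum.inr : B → A ⊕ B)) := ⟨_, hc, rfl⟩
    rw [AlgHom.map_adjoin] at h5
    refine Algebra.adjoin_mono ?_ h5
    rintro _ ⟨_, ⟨k, rfl⟩, rfl⟩
    exact Or.inr ⟨k, rfl⟩
  · rw [Finsupp.prod, map_prod]
    refine Subalgebra.prod_mem _ fun i hi => ?_
    rw [map_pow]
    refine pow_mem ?_ _
    rw [sumAlg_symm_esymm]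
    exact Algebra.subset_adjoin (Or.inl ⟨(i : ℕ) + 1, rfl⟩)

end BiSym

/-! #### Evaluation of polynomials as functions on `V` and on `ℝ^{n+1}` -/

variable {n : ℕ}

lemma sum_coords_eq_zero {n : ℕ} (v : zeroSum n) :
    ∑ i, (v : EuclideanSpace ℝ (Fin (n + 1))) i = 0 := by
  have h : coordSum (n + 1) (v : EuclideanSpace ℝ (Fin (n + 1))) = 0 := LinearMap.mem_ker.mp v.2
  exact h

lemma coe_add_apply {n : ℕ} (v w : zeroSum n) (i : Fin (n + 1)) :
    ((v + w : zeroSum n) : EuclideanSpace ℝ (Fin (n + 1))) i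
      = (v : EuclideanSpace ℝ (Fin (n + 1))) i + (w : EuclideanSpace ℝ (Fin (n + 1))) i := rfl

lemma permAct_coe_apply {n : ℕ} (σ : Equiv.Perm (Fin (n + 1))) (v : zeroSum n) (i : Fin (n + 1)) :
    ((permAct σ v : zeroSum n) : EuclideanSpace ℝ (Fin (n + 1))) i
      = (v : EuclideanSpace ℝ (Fin (n + 1))) (σ i) := rfl

/-- evaluation of polynomials as functions on `V` -/
noncomputable def evV (n : ℕ) : MvPolynomial (Fin (n + 1)) ℝ →ₐ[ℝ] (zeroSum n → ℝ) :=
  Pi.algHom ℝ _ fun v => aeval fun i => (v : EuclideanSpace ℝ (Fin (n + 1))) i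

lemma evV_apply (P : MvPolynomial (Fin (n + 1)) ℝ) (v : zeroSum n) :
    evV n P v = aeval (fun i => (v : EuclideanSpace ℝ (Fin (n + 1))) i) P := rfl

/-- evaluation of polynomials as functions on `ℝ^{n+1}` -/
noncomputable def evM (n : ℕ) : MvPolynomial (Fin (n + 1)) ℝ →ₐ[ℝ] ((Fin (n + 1) → ℝ) → ℝ) :=
  Pi.algHom ℝ _ fun x => aeval fun i => x i

lemma evM_apply (P : MvPolynomial (Fin (n + 1)) ℝ) (x : Fin (n + 1) → ℝ) :
    evM n P x = aeval (fun i => x i) P := rfl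

lemma aevalR_eq_eval {σ : Type*} (g : σ → ℝ) (p : MvPolynomial σ ℝ) :
    aeval g p = eval g p := by
  rw [aeval_def, Algebra.algebraMap_self]
  rfl

lemma evM_injective (n : ℕ) : Function.Injective (evM n) := by
  intro P Q h
  apply MvPolynomial.funext
  intro x
  have h1 := congrFun h x
  rw [evM_apply, evM_apply, aevalR_eq_eval, aevalR_eq_eval] at h1
  simpa using h1

/-- the projection onto V, as a linear map -/
noncomputable def projL (n : ℕ) : (Fin (n + 1) → ℝ) →ₗ[ℝ] zeroSum n where
  toFun x := ⟨(WithLp.toLp 2 (fun i => x i - ((n : ℝ) + 1)⁻¹ * ∑ j, x j) : EuclideanSpace ℝ (Fin (n + 1))), by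
    have hN : ((n : ℝ) + 1) ≠ 0 := by positivity
    rw [zeroSum, LinearMap.mem_ker]
    show ∑ i, (x i - ((n : ℝ) + 1)⁻¹ * ∑ j, x j) = 0
    rw [Finset.sum_sub_distrib, Finset.sum_const, Finset.card_univ, Fintype.card_fin]
    rw [nsmul_eq_mul]
    push_cast
    field_simp
    ring⟩
  map_add' x y := by
    apply Subtype.ext
    ext i
    show (x i + y i) - _ * ∑ j, (x j + y j) = (x i - _) + (y i - _)
    rw [Finset.sum_add_distrib]
    ring
  map_smul' c x := by
    apply Subtype.ext
    ext i
    show (c * x i) - _ * ∑ j, c * x j = c * (x i - _)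
    rw [← Finset.mul_sum]
    ring

lemma projL_coe_apply (x : Fin (n + 1) → ℝ) (i : Fin (n + 1)) :
    ((projL n x : zeroSum n) : EuclideanSpace ℝ (Fin (n + 1))) i
      = x i - ((n : ℝ) + 1)⁻¹ * ∑ j, x j := rfl

lemma projL_coe (v : zeroSum n) : projL n (v : EuclideanSpace ℝ (Fin (n + 1))) = v := by
  apply Subtype.ext
  ext i
  rw [projL_coe_apply, sum_coords_eq_zero v]
  simp

/-- coordinate functionals on V -/
noncomputable def coordV (n : ℕ) (i : Fin (n + 1)) : zeroSum n →ₗ[ℝ] ℝ where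
  toFun v := (v : EuclideanSpace ℝ (Fin (n + 1))) i
  map_add' _ _ := rfl
  map_smul' _ _ := rfl

lemma isPolyFun_evV (P : MvPolynomial (Fin (n + 1)) ℝ) : IsPolyFun (evV n P) := by
  show evV n P ∈ Algebra.adjoin ℝ _
  induction P using MvPolynomial.induction_on with
  | C c =>
    rw [show (C c : MvPolynomial (Fin (n + 1)) ℝ) = algebraMap ℝ _ c from rfl, AlgHom.commutes]
    exact Subalgebra.algebraMap_mem _ c
  | add p q hp hq => rw [map_add]; exact add_mem hp hq
  | mul_X p i hp =>
    rw [map_mul]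
    refine mul_mem hp (Algebra.subset_adjoin ⟨coordV n i, ?_⟩)
    funext v
    rw [evV_apply, aeval_X]
    rfl

lemma exists_evV_eq {f : zeroSum n → ℝ} (hf : IsPolyFun f) :
    ∃ P : MvPolynomial (Fin (n + 1)) ℝ, evV n P = f := by
  have hrange : f ∈ (evV n).range := by
    refine Algebra.adjoin_le ?_ hf
    rintro g ⟨l, rfl⟩
    refine (AlgHom.mem_range _).mpr
      ⟨∑ i, (l.comp (projL n)) (fun j => if j = i then 1 else 0) • X i, ?_⟩
    funext v
    rw [evV_apply]
    simp only [map_sum, map_smul, aeval_X, smul_eq_mul]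
    have hdec : (fun i => (v : EuclideanSpace ℝ (Fin (n + 1))) i)
        = ∑ i : Fin (n + 1), (v : EuclideanSpace ℝ (Fin (n + 1))) i
            • (fun j => if j = i then (1:ℝ) else 0) := by
      funext j
      rw [Finset.sum_apply]
      simp [Finset.sum_ite_eq]
    have h2 : l v = (l.comp (projL n)) (fun i => (v : EuclideanSpace ℝ (Fin (n + 1))) i) := by
      rw [LinearMap.comp_apply]
      congr 1
      exact (projL_coe v).symm
    rw [h2, hdec, map_sum]
    refine Finset.sum_congr rfl fun i _ => ?_
    rw [map_smul, smul_eq_mul, mul_comm]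
  obtain ⟨P, hP⟩ := hrange
  exact ⟨P, hP⟩

/-! #### Power sums of the two blocks as functions on `V` -/

noncomputable def pfun (n j : ℕ) : zeroSum n → ℝ :=
  fun v => ∑ i, ((v : EuclideanSpace ℝ (Fin (n + 1))) i) ^ j

noncomputable def qfun (n r s : ℕ) (eqv : Fin (n + 1) ≃ (Fin r ⊕ Fin s)) (j : ℕ) :
    zeroSum n → ℝ :=
  fun v => ∑ i : Fin r, ((v : EuclideanSpace ℝ (Fin (n + 1))) (eqv.symm (Sum.inl i))) ^ j

noncomputable def q'fun (n r s : ℕ) (eqv : Fin (n + 1) ≃ (Fin r ⊕ Fin s)) (j : ℕ) :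
    zeroSum n → ℝ :=
  fun v => ∑ i : Fin s, ((v : EuclideanSpace ℝ (Fin (n + 1))) (eqv.symm (Sum.inr i))) ^ j

lemma evV_psum (j : ℕ) : evV n (psum (Fin (n + 1)) ℝ j) = pfun n j := by
  funext v
  rw [evV_apply, psum, map_sum]
  simp [pfun]

lemma pfun_symm (n j : ℕ) (σ : Equiv.Perm (Fin (n + 1))) (v : zeroSum n) :
    pfun n j (permAct σ v) = pfun n j v := by
  simp only [pfun, permAct_coe_apply]
  exact Equiv.sum_comp σ (fun i => (v : EuclideanSpace ℝ (Fin (n + 1))) i ^ j)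

lemma evV_rename_qA (r s : ℕ) (eqv : Fin (n + 1) ≃ (Fin r ⊕ Fin s)) (j : ℕ) :
    evV n (rename (⇑eqv.symm ∘ Sum.inl) (psum (Fin r) ℝ j)) = qfun n r s eqv j := by
  funext v
  rw [evV_apply, aeval_rename, psum, map_sum]
  simp [qfun, Function.comp]

lemma evV_rename_qB (r s : ℕ) (eqv : Fin (n + 1) ≃ (Fin r ⊕ Fin s)) (j : ℕ) :
    evV n (rename (⇑eqv.symm ∘ Sum.inr) (psum (Fin s) ℝ j)) = q'fun n r s eqv j := by
  funext v
  rw [evV_apply, aeval_rename, psum, map_sum]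
  simp [q'fun, Function.comp]

lemma pfun_split (r s : ℕ) (eqv : Fin (n + 1) ≃ (Fin r ⊕ Fin s)) (j : ℕ) (v : zeroSum n) :
    pfun n j v = qfun n r s eqv j v + q'fun n r s eqv j v := by
  rw [pfun, ← Equiv.sum_comp eqv.symm
    (fun i => ((v : EuclideanSpace ℝ (Fin (n + 1))) i) ^ j), Fintype.sum_sum_type]
  rfl

lemma translate_id (r s k : ℕ) (eqv : Fin (n + 1) ≃ (Fin r ⊕ Fin s)) (a : zeroSum n) (α β : ℝ)
    (haA : ∀ i : Fin r, (a : EuclideanSpace ℝ (Fin (n + 1))) (eqv.symm (Sum.inl i)) = α)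
    (haB : ∀ i : Fin s, (a : EuclideanSpace ℝ (Fin (n + 1))) (eqv.symm (Sum.inr i)) = β)
    (v : zeroSum n) :
    pfun n (k+1) (v + a) =
      (∑ j ∈ Finset.range (k+2),
        qfun n r s eqv j v * α^(k+1-j) * ((k+1).choose j : ℝ)) +
      (∑ j ∈ Finset.range (k+2),
        q'fun n r s eqv j v * β^(k+1-j) * ((k+1).choose j : ℝ)) := by
  have h1 : pfun n (k+1) (v + a)
      = ∑ c : Fin r ⊕ Fin s, ((v : EuclideanSpace ℝ (Fin (n + 1))) (eqv.symm c)
          + (a : EuclideanSpace ℝ (Fin (n + 1))) (eqv.symm c)) ^ (k+1) := by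
    rw [pfun, ← Equiv.sum_comp eqv.symm]
    exact Finset.sum_congr rfl fun c _ => by rw [coe_add_apply]
  rw [h1, Fintype.sum_sum_type]
  congr 1
  · calc ∑ i : Fin r, ((v : EuclideanSpace ℝ (Fin (n + 1))) (eqv.symm (Sum.inl i))
          + (a : EuclideanSpace ℝ (Fin (n + 1))) (eqv.symm (Sum.inl i))) ^ (k+1)
        = ∑ i : Fin r, ∑ j ∈ Finset.range (k+2),
            ((v : EuclideanSpace ℝ (Fin (n + 1))) (eqv.symm (Sum.inl i))) ^ j
              * α^(k+1-j) * ((k+1).choose j : ℝ) := by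
          refine Finset.sum_congr rfl fun i _ => ?_
          rw [haA i, add_pow]
      _ = ∑ j ∈ Finset.range (k+2), ∑ i : Fin r,
            ((v : EuclideanSpace ℝ (Fin (n + 1))) (eqv.symm (Sum.inl i))) ^ j
              * α^(k+1-j) * ((k+1).choose j : ℝ) := Finset.sum_comm
      _ = ∑ j ∈ Finset.range (k+2),
            qfun n r s eqv j v * α^(k+1-j) * ((k+1).choose j : ℝ) := by
          refine Finset.sum_congr rfl fun j _ => ?_
          rw [qfun, ← Finset.sum_mul, ← Finset.sum_mul]
  · calc ∑ i : Fin s, ((v : EuclideanSpace ℝ (Fin (n + 1))) (eqv.symm (Sum.inr i))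
          + (a : EuclideanSpace ℝ (Fin (n + 1))) (eqv.symm (Sum.inr i))) ^ (k+1)
        = ∑ i : Fin s, ∑ j ∈ Finset.range (k+2),
            ((v : EuclideanSpace ℝ (Fin (n + 1))) (eqv.symm (Sum.inr i))) ^ j
              * β^(k+1-j) * ((k+1).choose j : ℝ) := by
          refine Finset.sum_congr rfl fun i _ => ?_
          rw [haB i, add_pow]
      _ = ∑ j ∈ Finset.range (k+2), ∑ i : Fin s,
            ((v : EuclideanSpace ℝ (Fin (n + 1))) (eqv.symm (Sum.inr i))) ^ j
              * β^(k+1-j) * ((k+1).choose j : ℝ) := Finset.sum_comm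
      _ = ∑ j ∈ Finset.range (k+2),
            q'fun n r s eqv j v * β^(k+1-j) * ((k+1).choose j : ℝ) := by
          refine Finset.sum_congr rfl fun j _ => ?_
          rw [q'fun, ← Finset.sum_mul, ← Finset.sum_mul]

end AnAux

open AnAux

theorem An_stabilizer_invariants_generated
    (n r : ℕ) (hr1 : 1 ≤ r) (hrn : r ≤ n) (s : ℕ) (hs : s = n + 1 - r)
    (a : zeroSum n)
    (ha : ∀ i : Fin (n + 1), (a : EuclideanSpace ℝ (Fin (n + 1))) i =
      if (i : ℕ) < r then (s : ℝ) / (n + 1) else -(r : ℝ) / (n + 1))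
    (f : zeroSum n → ℝ) (hf : IsPolyFun f)
    (hinv : ∀ σ : Equiv.Perm (Fin (n + 1)),
      (∀ i : Fin (n + 1), (i : ℕ) < r ↔ ((σ i : ℕ) < r)) →
      ∀ x : zeroSum n, f (permAct σ x) = f x) :
    f ∈ Algebra.adjoin ℝ
      ({g : zeroSum n → ℝ | IsPolyFun g ∧
          ∀ σ : Equiv.Perm (Fin (n + 1)), ∀ x : zeroSum n, g (permAct σ x) = g x} ∪
       {g : zeroSum n → ℝ | ∃ h : zeroSum n → ℝ,
          (IsPolyFun h ∧
            ∀ σ : Equiv.Perm (Fin (n + 1)), ∀ x : zeroSum n, h (permAct σ x) = h x) ∧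
          g = fun v => h (v + a)}) := by
  classical
  have hrs : r + s = n + 1 := by omega
  have hN : ((n : ℝ) + 1) ≠ 0 := by positivity
  -- the identification of `Fin (n+1)` with `Fin r ⊕ Fin s`
  set eqv : Fin (n + 1) ≃ (Fin r ⊕ Fin s) := (finSumFinEquiv.trans (finCongr hrs)).symm with heqv
  have hv1 : ∀ j : Fin r, ((eqv.symm (Sum.inl j) : Fin (n + 1)) : ℕ) = (j : ℕ) := by
    intro j
    simp [heqv]
  have hv2 : ∀ j : Fin s, ((eqv.symm (Sum.inr j) : Fin (n + 1)) : ℕ) = r + (j : ℕ) := by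
    intro j
    simp [heqv]
  -- the two generating sets of the target algebra
  set S1 : Set (zeroSum n → ℝ) := {g : zeroSum n → ℝ | IsPolyFun g ∧
      ∀ σ : Equiv.Perm (Fin (n + 1)), ∀ x : zeroSum n, g (permAct σ x) = g x} with hS1
  set S2 : Set (zeroSum n → ℝ) := {g : zeroSum n → ℝ | ∃ h : zeroSum n → ℝ,
      (IsPolyFun h ∧
        ∀ σ : Equiv.Perm (Fin (n + 1)), ∀ x : zeroSum n, h (permAct σ x) = h x) ∧
      g = fun v => h (v + a)} with hS2
  show f ∈ Algebra.adjoin ℝ (S1 ∪ S2)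
  -- membership of the basic symmetric functions
  have hpS1 : ∀ j : ℕ, pfun n j ∈ S1 := by
    intro j
    exact ⟨by rw [← evV_psum]; exact isPolyFun_evV _, fun σ x => pfun_symm n j σ x⟩
  have hpT : ∀ j : ℕ, pfun n j ∈ Algebra.adjoin ℝ (S1 ∪ S2) :=
    fun j => Algebra.subset_adjoin (Or.inl (hpS1 j))
  have htpT : ∀ j : ℕ, (fun v => pfun n j (v + a)) ∈ Algebra.adjoin ℝ (S1 ∪ S2) :=
    fun j => Algebra.subset_adjoin (Or.inr ⟨pfun n j, hpS1 j, rfl⟩)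
  -- the coordinates of `a`
  obtain ⟨α, β, haA, haB, hαβ⟩ : ∃ α β : ℝ,
      (∀ i : Fin r, (a : EuclideanSpace ℝ (Fin (n + 1))) (eqv.symm (Sum.inl i)) = α) ∧
      (∀ i : Fin s, (a : EuclideanSpace ℝ (Fin (n + 1))) (eqv.symm (Sum.inr i)) = β) ∧
      α - β = 1 := by
    refine ⟨(s : ℝ) / ((n : ℝ) + 1), -(r : ℝ) / ((n : ℝ) + 1), ?_, ?_, ?_⟩
    · intro i
      rw [ha, if_pos]
      rw [hv1]
      exact i.2
    · intro i
      rw [ha, if_neg]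
      rw [hv2]
      omega
    · have hcast : (r : ℝ) + (s : ℝ) = (n : ℝ) + 1 := by
        exact_mod_cast congrArg (Nat.cast : ℕ → ℝ) hrs
      field_simp
      linarith
  -- membership of the block power sums, by strong induction
  have hq'split : ∀ (j : ℕ) (w : zeroSum n),
      q'fun n r s eqv j w = pfun n j w - qfun n r s eqv j w := by
    intro j w
    rw [pfun_split r s eqv j w]
    ring
  have hQT : ∀ k : ℕ, qfun n r s eqv k ∈ Algebra.adjoin ℝ (S1 ∪ S2) := by
    intro k
    induction k using Nat.strong_induction_on with
    | _ k ih =>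
      have hk0 : ((k : ℝ) + 1) ≠ 0 := by positivity
      have hkey : (fun v => ((k : ℝ) + 1) * qfun n r s eqv k v)
          = (fun v => pfun n (k+1) (v + a)) - pfun n (k+1)
            - (((k : ℝ) + 1) * β) • pfun n k
            - ∑ j ∈ Finset.range k, (((k+1).choose j : ℝ)) •
                (α^(k+1-j) • qfun n r s eqv j
                  + β^(k+1-j) • (pfun n j - qfun n r s eqv j)) := by
        funext v
        have hid := translate_id r s k eqv a α β haA haB v
        simp only [Finset.sum_range_succ, Nat.choose_self, Nat.choose_succ_self_right,
          Nat.sub_self, pow_zero, Nat.add_sub_cancel_left, pow_one, Nat.cast_one, mul_one,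
          Nat.cast_add] at hid
        simp only [hq'split] at hid
        simp only [Pi.sub_apply, Pi.smul_apply, Pi.add_apply, Finset.sum_apply, smul_eq_mul]
        have hsum : ∑ j ∈ Finset.range k, (((k+1).choose j : ℝ)) *
              (α^(k+1-j) * qfun n r s eqv j v
                + β^(k+1-j) * (pfun n j v - qfun n r s eqv j v))
            = (∑ j ∈ Finset.range k,
                qfun n r s eqv j v * α^(k+1-j) * ((k+1).choose j : ℝ))
              + (∑ j ∈ Finset.range k,
                (pfun n j v - qfun n r s eqv j v) * β^(k+1-j) * ((k+1).choose j : ℝ)) := by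
          rw [← Finset.sum_add_distrib]
          exact Finset.sum_congr rfl fun j _ => by ring
        linear_combination hsum - hid - (((k : ℝ) + 1) * qfun n r s eqv k v) * hαβ
      have hmem : (fun v => ((k : ℝ) + 1) * qfun n r s eqv k v)
          ∈ Algebra.adjoin ℝ (S1 ∪ S2) := by
        rw [hkey]
        refine sub_mem (sub_mem (sub_mem (htpT (k+1)) (hpT (k+1)))
          (Subalgebra.smul_mem _ (hpT k) _)) (Subalgebra.sum_mem _ fun j hj => ?_)
        refine Subalgebra.smul_mem _ (add_mem (Subalgebra.smul_mem _
          (ih j (Finset.mem_range.mp hj)) _)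
          (Subalgebra.smul_mem _ (sub_mem (hpT j) (ih j (Finset.mem_range.mp hj))) _)) _
      have : qfun n r s eqv k
          = (((k : ℝ) + 1))⁻¹ • (fun v => ((k : ℝ) + 1) * qfun n r s eqv k v) := by
        funext v
        simp only [Pi.smul_apply, smul_eq_mul]
        field_simp
      rw [this]
      exact Subalgebra.smul_mem _ hmem _
  have hQ'T : ∀ k : ℕ, q'fun n r s eqv k ∈ Algebra.adjoin ℝ (S1 ∪ S2) := by
    intro k
    have : q'fun n r s eqv k = pfun n k - qfun n r s eqv k := by
      funext w
      rw [hq'split k w]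
      rfl
    rw [this]
    exact sub_mem (hpT k) (hQT k)
  -- find a symmetric-under-blocks polynomial representative of f
  obtain ⟨P0, hP0⟩ := exists_evV_eq hf
  set P : MvPolynomial (Fin (n + 1)) ℝ :=
    aeval (fun i => X i - C (((n : ℝ) + 1)⁻¹) * ∑ j, X j) P0 with hPdef
  have hMP : ∀ x : Fin (n + 1) → ℝ, evM n P x = f (projL n x) := by
    intro x
    have hcomp := AlgHom.congr_fun
      (comp_aeval (f := fun i => X i - C (((n : ℝ) + 1)⁻¹) * ∑ j, X j)
        (aeval (fun i => x i) : MvPolynomial (Fin (n + 1)) ℝ →ₐ[ℝ] ℝ)) P0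
    rw [evM_apply, hPdef]
    rw [show (aeval (fun i => x i)) ((aeval fun i => X i - C (((n : ℝ) + 1)⁻¹) * ∑ j, X j) P0)
        = ((aeval (fun i => x i : Fin (n+1) → ℝ)).comp
            (aeval fun i => X i - C (((n : ℝ) + 1)⁻¹) * ∑ j, X j)) P0 from rfl, hcomp]
    rw [← hP0, evV_apply]
    have harg : (fun i => (aeval fun i' : Fin (n + 1) => x i')
          (X i - C (((n : ℝ) + 1)⁻¹) * ∑ j, X j))
        = fun i => ((projL n x : zeroSum n) : EuclideanSpace ℝ (Fin (n + 1))) i := by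
      funext i
      rw [projL_coe_apply]
      simp [map_sub, map_mul, aeval_X, aeval_C, map_sum]
    rw [harg]
  have hfP : evV n P = f := by
    funext v
    have h1 : evV n P v = evM n P (fun i => (v : EuclideanSpace ℝ (Fin (n + 1))) i) := rfl
    rw [h1, hMP]
    have h2 : projL n (fun i => (v : EuclideanSpace ℝ (Fin (n + 1))) i) = v := projL_coe v
    rw [h2]
  -- `P` is invariant under block permutations
  have hsymP : ∀ σ : Equiv.Perm (Fin (n + 1)),
      (∀ i : Fin (n + 1), (i : ℕ) < r ↔ ((σ i : ℕ) < r)) → rename σ P = P := by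
    intro σ hσ
    apply evM_injective n
    funext x
    have e1 : evM n (rename σ P) x = evM n P (fun i => x (σ i)) := by
      rw [evM_apply, evM_apply, aeval_rename]
      rfl
    rw [e1, hMP, hMP]
    have e2 : projL n (fun i => x (σ i)) = permAct σ (projL n x) := by
      apply Subtype.ext
      ext i
      rw [permAct_coe_apply, projL_coe_apply, projL_coe_apply]
      congr 1
      congr 1
      exact Equiv.sum_comp σ x
    rw [e2, hinv σ hσ]
  -- block permutation property of the transported polynomial
  have hblock : ∀ (e1 : Equiv.Perm (Fin r)) (e2 : Equiv.Perm (Fin s)), ∀ i : Fin (n + 1),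
      (i : ℕ) < r ↔
        (((eqv.trans ((Equiv.sumCongr e1 e2).trans eqv.symm)) i : Fin (n + 1)) : ℕ) < r := by
    intro e1 e2 i
    rcases h : eqv i with j | j
    · have l1 : (i : ℕ) = (j : ℕ) := by
        have hi : i = eqv.symm (Sum.inl j) := by rw [← h, Equiv.symm_apply_apply]
        rw [hi, hv1]
      have l2 : (((eqv.trans ((Equiv.sumCongr e1 e2).trans eqv.symm)) i : Fin (n + 1)) : ℕ)
          = ((e1 j : Fin r) : ℕ) := by
        simp only [Equiv.trans_apply, h, Equiv.sumCongr_apply, Sum.map_inl]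
        exact hv1 _
      rw [l1, l2]
      have := j.2
      have := (e1 j).2
      omega
    · have l1 : (i : ℕ) = r + (j : ℕ) := by
        have hi : i = eqv.symm (Sum.inr j) := by rw [← h, Equiv.symm_apply_apply]
        rw [hi, hv2]
      have l2 : (((eqv.trans ((Equiv.sumCongr e1 e2).trans eqv.symm)) i : Fin (n + 1)) : ℕ)
          = r + ((e2 j : Fin s) : ℕ) := by
        simp only [Equiv.trans_apply, h, Equiv.sumCongr_apply, Sum.map_inr]
        exact hv2 _
      rw [l1, l2]
      omega
  set P' : MvPolynomial (Fin r ⊕ Fin s) ℝ := rename (⇑eqv) P with hP'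
  have hA' : ∀ e1 : Equiv.Perm (Fin r),
      rename (Equiv.sumCongr e1 (Equiv.refl (Fin s))) P' = P' := by
    intro e1
    have hfun : (⇑(Equiv.sumCongr e1 (Equiv.refl (Fin s))) ∘ ⇑eqv)
        = ⇑eqv ∘ ⇑(eqv.trans ((Equiv.sumCongr e1 (Equiv.refl (Fin s))).trans eqv.symm)) := by
      funext i
      simp [Equiv.trans_apply, Equiv.apply_symm_apply]
    have h2 := hsymP (eqv.trans ((Equiv.sumCongr e1 (Equiv.refl (Fin s))).trans eqv.symm))
      (hblock e1 (Equiv.refl (Fin s)))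
    rw [hP', rename_rename, hfun, ← rename_rename, h2]
  have hB' : ∀ e2 : Equiv.Perm (Fin s),
      rename (Equiv.sumCongr (Equiv.refl (Fin r)) e2) P' = P' := by
    intro e2
    have hfun : (⇑(Equiv.sumCongr (Equiv.refl (Fin r)) e2) ∘ ⇑eqv)
        = ⇑eqv ∘ ⇑(eqv.trans ((Equiv.sumCongr (Equiv.refl (Fin r)) e2).trans eqv.symm)) := by
      funext i
      simp [Equiv.trans_apply, Equiv.apply_symm_apply]
    have h2 := hsymP (eqv.trans ((Equiv.sumCongr (Equiv.refl (Fin r)) e2).trans eqv.symm))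
      (hblock (Equiv.refl (Fin r)) e2)
    rw [hP', rename_rename, hfun, ← rename_rename, h2]
  have hPmem' := bisym_mem P' hA' hB'
  have hPP' : P = rename (⇑eqv.symm) P' := by
    rw [hP', rename_rename,
      show (⇑eqv.symm ∘ ⇑eqv) = id from funext fun i => Equiv.symm_apply_apply _ _, rename_id_apply]
  have hmemP : P ∈ Algebra.adjoin ℝ ((rename (⇑eqv.symm) :
      MvPolynomial (Fin r ⊕ Fin s) ℝ →ₐ[ℝ] MvPolynomial (Fin (n + 1)) ℝ) ''
        ((Set.range fun k : ℕ => rename (Sum.inl : Fin r → Fin r ⊕ Fin s) (esymm (Fin r) ℝ k)) ∪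
         (Set.range fun k : ℕ => rename (Sum.inr : Fin s → Fin r ⊕ Fin s) (esymm (Fin s) ℝ k)))) := by
    have hm : P ∈ (Algebra.adjoin ℝ
        ((Set.range fun k : ℕ => rename (Sum.inl : Fin r → Fin r ⊕ Fin s) (esymm (Fin r) ℝ k)) ∪
         (Set.range fun k : ℕ => rename (Sum.inr : Fin s → Fin r ⊕ Fin s) (esymm (Fin s) ℝ k)))).map
        (rename (⇑eqv.symm)) := ⟨P', hPmem', hPP'.symm⟩
    rwa [AlgHom.map_adjoin] at hm
  have hmemf : f ∈ Algebra.adjoin ℝ ((evV n) '' ((rename (⇑eqv.symm) :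
      MvPolynomial (Fin r ⊕ Fin s) ℝ →ₐ[ℝ] MvPolynomial (Fin (n + 1)) ℝ) ''
        ((Set.range fun k : ℕ => rename (Sum.inl : Fin r → Fin r ⊕ Fin s) (esymm (Fin r) ℝ k)) ∪
         (Set.range fun k : ℕ => rename (Sum.inr : Fin s → Fin r ⊕ Fin s) (esymm (Fin s) ℝ k))))) := by
    have hm : f ∈ (Algebra.adjoin ℝ _).map (evV n) := ⟨P, hmemP, hfP⟩
    rwa [AlgHom.map_adjoin] at hm
  refine Algebra.adjoin_le ?_ hmemf
  rintro g ⟨_, ⟨_, (⟨k, rfl⟩ | ⟨k, rfl⟩), rfl⟩, rfl⟩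
  · -- first block
    show evV n (rename (⇑eqv.symm) (rename Sum.inl (esymm (Fin r) ℝ k))) ∈ _
    rw [rename_rename]
    have h6 := esymm_mem_adjoin_psum r k
    have h7 : evV n (rename (⇑eqv.symm ∘ Sum.inl) (esymm (Fin r) ℝ k))
        ∈ Algebra.adjoin ℝ (((evV n).comp (rename (⇑eqv.symm ∘ Sum.inl))) ''
            Set.range (psum (Fin r) ℝ)) := by
      have hm : evV n (rename (⇑eqv.symm ∘ Sum.inl) (esymm (Fin r) ℝ k))
          ∈ (Algebra.adjoin ℝ (Set.range (psum (Fin r) ℝ))).map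
              ((evV n).comp (rename (⇑eqv.symm ∘ Sum.inl))) := ⟨_, h6, rfl⟩
      rwa [AlgHom.map_adjoin] at hm
    refine Algebra.adjoin_le ?_ h7
    rintro _ ⟨_, ⟨j, rfl⟩, rfl⟩
    show ((evV n).comp (rename (⇑eqv.symm ∘ Sum.inl))) (psum (Fin r) ℝ j) ∈ _
    rw [AlgHom.comp_apply, evV_rename_qA]
    exact hQT j
  · -- second block
    show evV n (rename (⇑eqv.symm) (rename Sum.inr (esymm (Fin s) ℝ k))) ∈ _
    rw [rename_rename]
    have h6 := esymm_mem_adjoin_psum s k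
    have h7 : evV n (rename (⇑eqv.symm ∘ Sum.inr) (esymm (Fin s) ℝ k))
        ∈ Algebra.adjoin ℝ (((evV n).comp (rename (⇑eqv.symm ∘ Sum.inr))) ''
            Set.range (psum (Fin s) ℝ)) := by
      have hm : evV n (rename (⇑eqv.symm ∘ Sum.inr) (esymm (Fin s) ℝ k))
          ∈ (Algebra.adjoin ℝ (Set.range (psum (Fin s) ℝ))).map
              ((evV n).comp (rename (⇑eqv.symm ∘ Sum.inr))) := ⟨_, h6, rfl⟩
      rwa [AlgHom.map_adjoin] at hm
    refine Algebra.adjoin_le ?_ h7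
    rintro _ ⟨_, ⟨j, rfl⟩, rfl⟩
    show ((evV n).comp (rename (⇑eqv.symm ∘ Sum.inr))) (psum (Fin s) ℝ j) ∈ _
    rw [AlgHom.comp_apply, evV_rename_qB]
    exact hQ'T j
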